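/- For every integer partition P of n, there exists a sequence of split steps transforming {n} into P such that each split acts on a part x satisfying 2 ≤ x ≤ ⌊2n/3⌋ or x = n. -/

import Mathlib

/-- A split step acting on a part whose value lies in `S`: it replaces one part `x ∈ S`
of a multiset by two positive parts `a`, `b` with `a + b = x`. -/
def SplitStepIn (S : Set ℕ) (P Q : Multiset ℕ) : Prop :=
  ∃ x a b : ℕ, x ∈ P ∧ x ∈ S ∧ 0 < a ∧ 0 < b ∧ a + b = x ∧ Q = a ::ₘ b ::ₘ P.erase x

lemma splitStepIn_mono {S S' : Set ℕ} (hSS : S ⊆ S') {P Q : Multiset ℕ}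
    (h : SplitStepIn S P Q) : SplitStepIn S' P Q := by
  obtain ⟨x, a, b, hxP, hxS, ha, hb, hab, hQ⟩ := h
  exact ⟨x, a, b, hxP, hSS hxS, ha, hb, hab, hQ⟩

lemma splitStepIn_add_left {S : Set ℕ} (C : Multiset ℕ) {P Q : Multiset ℕ}
    (h : SplitStepIn S P Q) : SplitStepIn S (C + P) (C + Q) := by
  obtain ⟨x, a, b, hxP, hxS, ha, hb, hab, rfl⟩ := h
  refine ⟨x, a, b, by simp [hxP], hxS, ha, hb, hab, ?_⟩
  rw [Multiset.erase_add_right_pos _ hxP]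
  ext y
  simp [Multiset.count_cons, Multiset.count_add]

lemma rtg_add_left {S : Set ℕ} (C : Multiset ℕ) {P Q : Multiset ℕ}
    (h : Relation.ReflTransGen (SplitStepIn S) P Q) :
    Relation.ReflTransGen (SplitStepIn S) (C + P) (C + Q) :=
  Relation.ReflTransGen.lift (fun M => C + M) (fun _ _ hr => splitStepIn_add_left C hr) _ _ h

lemma rtg_add_right {S : Set ℕ} (C : Multiset ℕ) {P Q : Multiset ℕ}
    (h : Relation.ReflTransGen (SplitStepIn S) P Q) :
    Relation.ReflTransGen (SplitStepIn S) (P + C) (Q + C) := by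
  rw [add_comm P C, add_comm Q C]; exact rtg_add_left C h

/-- Any partition of `m` with positive parts is reachable from `{m}` using splits
on parts `x` with `2 ≤ x ≤ m`. -/
lemma splitAll : ∀ (P : Multiset ℕ), (∀ x ∈ P, 0 < x) → P ≠ 0 →
    Relation.ReflTransGen (SplitStepIn {x | 2 ≤ x ∧ x ≤ P.sum}) {P.sum} P := by
  intro P
  induction P using Multiset.strongInductionOn with
  | ih P ih =>
    intro hpos hne
    obtain ⟨p, hp⟩ := Multiset.exists_mem_of_ne_zero hne
    set R := P.erase p with hR
    have hPR : P = p ::ₘ R := (Multiset.cons_erase hp).symm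
    by_cases hR0 : R = 0
    · rw [hPR, hR0]
      exact Relation.ReflTransGen.refl
    · obtain ⟨q, hq⟩ := Multiset.exists_mem_of_ne_zero hR0
      have hppos : 0 < p := hpos p hp
      have hRpos : ∀ x ∈ R, 0 < x := fun x hx => hpos x (Multiset.mem_of_mem_erase hx)
      have hRsum : 0 < R.sum := lt_of_lt_of_le (hRpos q hq) (Multiset.single_le_sum (fun x hx => (hRpos x hx).le) q hq)
      have hsum : P.sum = p + R.sum := by rw [hPR, Multiset.sum_cons]
      have step1 : SplitStepIn {x | 2 ≤ x ∧ x ≤ P.sum} {P.sum} (p ::ₘ R.sum ::ₘ 0) := by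
        refine ⟨P.sum, p, R.sum, Multiset.mem_singleton_self _, ⟨?_, le_refl _⟩,
          hppos, hRsum, hsum.symm, by simp⟩
        omega
      have ihR := ih R (by rw [hPR]; exact Multiset.lt_cons_self R p) hRpos hR0
      have ihR' : Relation.ReflTransGen (SplitStepIn {x | 2 ≤ x ∧ x ≤ P.sum}) {R.sum} R := by
        refine Relation.ReflTransGen.mono (fun a b hab => splitStepIn_mono ?_ hab) _ _ ihR
        intro x hx
        exact ⟨hx.1, hx.2.trans (by omega)⟩
      have tail : Relation.ReflTransGen (SplitStepIn {x | 2 ≤ x ∧ x ≤ P.sum})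
          ({p} + {R.sum}) ({p} + R) := rtg_add_left {p} ihR'
      have h1 : ({p} : Multiset ℕ) + {R.sum} = p ::ₘ R.sum ::ₘ 0 := by
        ext y; simp [Multiset.count_cons]
      have h2 : ({p} : Multiset ℕ) + R = P := by
        rw [hPR]; ext y; simp [Multiset.count_cons]
      rw [h1, h2] at tail
      exact Relation.ReflTransGen.head step1 tail

/-- Greedy choice of a sub-multiset with sum in `[n/3, 2n/3)`-range (scaled by 3). -/
lemma greedy (n : ℕ) (hn : 0 < n) : ∀ (P : Multiset ℕ), (∀ p ∈ P, 3 * p < n) →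
    n ≤ 3 * P.sum → ∃ A, A ≤ P ∧ n ≤ 3 * A.sum ∧ 3 * A.sum < 2 * n := by
  intro P
  induction P using Multiset.induction with
  | empty => intro _ h; simp at h; omega
  | cons p R ih =>
    intro hsmall hbig
    by_cases hR : n ≤ 3 * R.sum
    · obtain ⟨A, hA, h1, h2⟩ := ih (fun q hq => hsmall q (Multiset.mem_cons_of_mem hq)) hR
      exact ⟨A, hA.trans (Multiset.le_cons_self R p), h1, h2⟩
    · refine ⟨p ::ₘ R, le_refl _, ?_, ?_⟩
      · rwa [Multiset.sum_cons] at hbig ⊢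
      · have := hsmall p (Multiset.mem_cons_self p R)
        rw [Multiset.sum_cons]
        omega

lemma combine {S : Set ℕ} {n a b : ℕ} (hnS : n ∈ S) (ha : 0 < a) (hb : 0 < b)
    (hab : a + b = n) {A B : Multiset ℕ}
    (hA : Relation.ReflTransGen (SplitStepIn S) {a} A)
    (hB : Relation.ReflTransGen (SplitStepIn S) {b} B) :
    Relation.ReflTransGen (SplitStepIn S) {n} (A + B) := by
  have step1 : SplitStepIn S {n} (a ::ₘ b ::ₘ 0) :=
    ⟨n, a, b, Multiset.mem_singleton_self _, hnS, ha, hb, hab, by simp⟩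
  have h1 : (a ::ₘ b ::ₘ 0 : Multiset ℕ) = {a} + {b} := by
    ext y; simp [Multiset.count_cons]
  have t1 : Relation.ReflTransGen (SplitStepIn S) ({a} + {b}) (A + {b}) := rtg_add_right {b} hA
  have t2 : Relation.ReflTransGen (SplitStepIn S) (A + {b}) (A + B) := rtg_add_left A hB
  exact Relation.ReflTransGen.head step1 (h1 ▸ (t1.trans t2))

/-- For every integer partition `P` of `n`, there is a sequence of split steps transforming
`{n}` into `P` in which each split acts on a part `x` with `2 ≤ x ≤ ⌊2n/3⌋` or `x = n`. -/
theorem reachable_with_IDP_sizes (n : ℕ) (hn : 0 < n) (P : Multiset ℕ)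
    (hpos : ∀ x ∈ P, 0 < x) (hsum : P.sum = n) :
    Relation.ReflTransGen
      (SplitStepIn ({x : ℕ | 2 ≤ x ∧ x ≤ 2 * n / 3} ∪ {n})) {n} P := by
  set S : Set ℕ := {x : ℕ | 2 ≤ x ∧ x ≤ 2 * n / 3} ∪ {n} with hS
  have hnS : n ∈ S := Or.inr rfl
  have hdiv : ∀ x : ℕ, 3 * x ≤ 2 * n → x ≤ 2 * n / 3 := by
    intro x hx
    rw [Nat.le_div_iff_mul_le (by norm_num)]
    omega
  -- splits bounded by m with 3*m ≤ 2*n are in S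
  have hsub : ∀ m : ℕ, 3 * m ≤ 2 * n → {x | 2 ≤ x ∧ x ≤ m} ⊆ S := by
    intro m hm x hx
    obtain ⟨h1, h2⟩ := hx
    exact Or.inl ⟨h1, hdiv x (by omega)⟩
  by_cases hnP : n ∈ P
  · -- then P = {n}
    have hPn : P = {n} := by
      have h1 : P = n ::ₘ P.erase n := (Multiset.cons_erase hnP).symm
      have h2 : (P.erase n).sum = 0 := by
        have := hsum
        rw [h1, Multiset.sum_cons] at this
        omega
      have h3 : P.erase n = 0 := by
        by_contra h
        obtain ⟨q, hq⟩ := Multiset.exists_mem_of_ne_zero h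
        have hqpos : 0 < q := hpos q (Multiset.mem_of_mem_erase hq)
        have := Multiset.single_le_sum (fun x hx => (hpos x (Multiset.mem_of_mem_erase hx)).le) q hq
        omega
      rw [h1, h3]; rfl
    rw [hPn]
  · have hPne : P ≠ 0 := by
      intro h; rw [h] at hsum; simp at hsum; omega
    by_cases hbigpart : ∃ p ∈ P, n ≤ 3 * p
    · -- split n into p and n - p
      obtain ⟨p, hpP, hp3⟩ := hbigpart
      have hppos : 0 < p := hpos p hpP
      set R := P.erase p with hR
      have hPR : P = p ::ₘ R := (Multiset.cons_erase hpP).symm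
      have hRsum : R.sum = n - p := by
        rw [hPR, Multiset.sum_cons] at hsum; omega
      have hple : p ≤ n := hsum ▸ Multiset.single_le_sum (fun x hx => (hpos x hx).le) p hpP
      have hpn : p < n := lt_of_le_of_ne hple (fun h => hnP (h ▸ hpP))
      have hRne : R ≠ 0 := by
        intro h; rw [h] at hRsum; simp at hRsum; omega
      have hRpos : ∀ x ∈ R, 0 < x := fun x hx => hpos x (Multiset.mem_of_mem_erase hx)
      have hRreach := splitAll R hRpos hRne
      have hRreach' : Relation.ReflTransGen (SplitStepIn S) {n - p} R := by
        rw [← hRsum]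
        exact Relation.ReflTransGen.mono
          (fun a b hab => splitStepIn_mono (hRsum ▸ hsub (n - p) (by omega)) hab) _ _ hRreach
      have hcomb := combine hnS hppos (show 0 < n - p by omega)
        (show p + (n - p) = n by omega) (Relation.ReflTransGen.refl (a := ({p} : Multiset ℕ)))
        hRreach'
      have : ({p} : Multiset ℕ) + R = P := by
        rw [hPR]; ext y; simp [Multiset.count_cons]
      rwa [this] at hcomb
    · push_neg at hbigpart
      obtain ⟨A, hAle, hA1, hA2⟩ := greedy n hn P hbigpart (by omega)
      set B := P - A with hB
      have hPAB : A + B = P := by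
        rw [hB, add_comm]
        exact tsub_add_cancel_of_le hAle
      have hBsum : B.sum = n - A.sum := by
        have : A.sum + B.sum = n := by rw [← Multiset.sum_add, hPAB, hsum]
        omega
      have hApos : ∀ x ∈ A, 0 < x := fun x hx => hpos x (Multiset.mem_of_le hAle hx)
      have hBpos : ∀ x ∈ B, 0 < x := fun x hx => hpos x (Multiset.mem_of_le (Multiset.sub_le_self P A) hx)
      have hAne : A ≠ 0 := by
        intro h; rw [h] at hA1; simp at hA1; omega
      have haspos : 0 < A.sum := by
        obtain ⟨q, hq⟩ := Multiset.exists_mem_of_ne_zero hAne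
        exact lt_of_lt_of_le (hApos q hq) (Multiset.single_le_sum (fun x hx => (hApos x hx).le) q hq)
      have hBne : B ≠ 0 := by
        intro h; rw [h] at hBsum; simp at hBsum; omega
      have hAr : Relation.ReflTransGen (SplitStepIn S) {A.sum} A :=
        Relation.ReflTransGen.mono
          (fun a b hab => splitStepIn_mono (hsub A.sum (by omega)) hab) _ _ (splitAll A hApos hAne)
      have hBr : Relation.ReflTransGen (SplitStepIn S) {B.sum} B :=
        Relation.ReflTransGen.mono
          (fun a b hab => splitStepIn_mono (hsub B.sum (by omega)) hab) _ _ (splitAll B hBpos hBne)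
      have hcomb := combine hnS haspos (show 0 < B.sum by omega)
        (show A.sum + B.sum = n by omega) hAr hBr
      rwa [hPAB] at hcomb
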